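/- Consider the system i ḋ₂ = −|d₂|²d₂ + 2|d₋₂|²d₂ + 2 conj(d₋₂) d₀², i ḋ₋₂ = −|d₋₂|²d₋₂ + 2|d₂|²d₋₂ + 2 conj(d₂) d₀², i ḋ₀ = 4 d₂ d₋₂ conj(d₀). Then for any λ, β₁, β₂ ∈ ℝ, the function (d₂,d₋₂,d₀)(t) = λ (√(2/9) e^{iβ₁}, √(2/9) e^{iβ₂}, i √(5/9) e^{i(β₁+β₂)/2}) e^{iμt} with μ = (8/9)λ² is an exact solution. -/

import Mathlib

open Complex

theorem key_exp_deriv (C : ℂ) (mu t : ℝ) :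
    HasDerivAt (fun s : ℝ => C * Complex.exp (Complex.I * mu * s))
      (C * (Complex.I * mu * Complex.exp (Complex.I * mu * t))) t := by
  have h : HasDerivAt (fun z : ℂ => Complex.exp (Complex.I * mu * z))
      (Complex.I * mu * Complex.exp (Complex.I * mu * t)) (t : ℂ) := by
    have h1 : HasDerivAt (fun z : ℂ => Complex.I * mu * z) (Complex.I * mu) (t:ℂ) := by
      simpa using (hasDerivAt_id (t:ℂ)).const_mul (Complex.I * (mu:ℂ))
    have h2 := (Complex.hasDerivAt_exp (Complex.I * mu * t)).comp (t:ℂ) h1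
    refine h2.congr_deriv ?_
    ring
  exact (h.comp_ofReal).const_mul C

theorem E2_stationary_wave_e (lam beta1 beta2 : ℝ)
    (d2 dm2 d0 : ℝ → ℂ) (mu : ℝ) (hmu : mu = (8 / 9) * lam ^ 2)
    (hd2 : ∀ t, d2 t = (lam : ℂ) * Real.sqrt (2 / 9) * Complex.exp (Complex.I * beta1) *
        Complex.exp (Complex.I * mu * t))
    (hdm2 : ∀ t, dm2 t = (lam : ℂ) * Real.sqrt (2 / 9) * Complex.exp (Complex.I * beta2) *
        Complex.exp (Complex.I * mu * t))
    (hd0 : ∀ t, d0 t = (lam : ℂ) * Complex.I * Real.sqrt (5 / 9) *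
        Complex.exp (Complex.I * ((beta1 + beta2) / 2)) * Complex.exp (Complex.I * mu * t)) :
    (∀ t, HasDerivAt d2 (-Complex.I *
      (-‖d2 t‖ ^ 2 * d2 t + 2 * ‖dm2 t‖ ^ 2 * d2 t +
        2 * (starRingEnd ℂ) (dm2 t) * (d0 t) ^ 2)) t) ∧
    (∀ t, HasDerivAt dm2 (-Complex.I *
      (-‖dm2 t‖ ^ 2 * dm2 t + 2 * ‖d2 t‖ ^ 2 * dm2 t +
        2 * (starRingEnd ℂ) (d2 t) * (d0 t) ^ 2)) t) ∧
    (∀ t, HasDerivAt d0 (-Complex.I *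
      (4 * d2 t * dm2 t * (starRingEnd ℂ) (d0 t))) t) := by
  have habs : ∀ z : ℂ, ((‖z‖ : ℝ) : ℂ)^2 = z * (starRingEnd ℂ) z := fun z => by
    rw [← Complex.ofReal_pow, Complex.sq_norm, Complex.mul_conj]
  refine ⟨fun t => ?_, fun t => ?_, fun t => ?_⟩
  · have h := (key_exp_deriv ((lam : ℂ) * Real.sqrt (2 / 9) * Complex.exp (Complex.I * beta1))
      mu t).congr_of_eventuallyEq (Filter.Eventually.of_forall hd2)
    refine h.congr_deriv ?_
    symm
    rw [hd2 t, hdm2 t, hd0 t]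
    simp only [habs]
    simp only [map_mul, ← Complex.exp_conj, Complex.conj_I, Complex.conj_ofReal]
    set r : ℂ := (lam : ℂ)
    set a : ℂ := ((Real.sqrt (2/9) : ℝ) : ℂ)
    set b : ℂ := ((Real.sqrt (5/9) : ℝ) : ℂ)
    set X1 : ℂ := Complex.exp (Complex.I * (beta1:ℂ))
    set Y1 : ℂ := Complex.exp (-Complex.I * (beta1:ℂ))
    set X2 : ℂ := Complex.exp (Complex.I * (beta2:ℂ))
    set Y2 : ℂ := Complex.exp (-Complex.I * (beta2:ℂ))
    set T : ℂ := Complex.exp (Complex.I * (mu:ℂ) * (t:ℂ))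
    set S : ℂ := Complex.exp (-Complex.I * (mu:ℂ) * (t:ℂ))
    set H : ℂ := Complex.exp (Complex.I * (((beta1:ℂ) + (beta2:ℂ)) / 2))
    have h1 : Y1 * X1 = 1 := by
      rw [← Complex.exp_add]; norm_num [Complex.exp_zero]
    have h2 : Y2 * X2 = 1 := by
      rw [← Complex.exp_add]; norm_num [Complex.exp_zero]
    have h3 : S * T = 1 := by
      rw [← Complex.exp_add]; ring_nf; exact Complex.exp_zero
    have h4 : H ^ 2 = X1 * X2 := by
      rw [sq, ← Complex.exp_add, ← Complex.exp_add]; congr 1; ring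
    have h5 : a ^ 2 = 2 / 9 := by
      rw [← Complex.ofReal_pow, Real.sq_sqrt (by norm_num : (2:ℝ)/9 ≥ 0)]; norm_num
    have h6 : b ^ 2 = 5 / 9 := by
      rw [← Complex.ofReal_pow, Real.sq_sqrt (by norm_num : (5:ℝ)/9 ≥ 0)]; norm_num
    have h7 : Complex.I ^ 2 = -1 := Complex.I_sq
    have h8 : (mu : ℂ) = 8 / 9 * r ^ 2 := by rw [hmu]; push_cast; ring
    linear_combination (-2 * Complex.I * r^3 * a * b^2 * Y2 * S * H^2 * T^2) * h7 +
      (2 * Complex.I * r^3 * a * b^2 * Y2 * S * T^2) * h4 +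
      (2 * Complex.I * r^3 * a * Y2 * S * X1 * X2 * T^2) * h6 +
      (Complex.I * r^3 * a * X1 * T^2 * S * (10/9 - 2*a^2)) * h2 +
      (Complex.I * r^3 * a * X1 * T * (10/9 - a^2)) * h3 +
      (Complex.I * r^3 * a^3 * X1 * T^2 * S) * h1 +
      (-Complex.I * r^3 * a * X1 * T) * h5 +
      (-Complex.I * r * a * X1 * T) * h8
  · have h := (key_exp_deriv ((lam : ℂ) * Real.sqrt (2 / 9) * Complex.exp (Complex.I * beta2))
      mu t).congr_of_eventuallyEq (Filter.Eventually.of_forall hdm2)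
    refine h.congr_deriv ?_
    symm
    rw [hd2 t, hdm2 t, hd0 t]
    simp only [habs]
    simp only [map_mul, ← Complex.exp_conj, Complex.conj_I, Complex.conj_ofReal]
    set r : ℂ := (lam : ℂ)
    set a : ℂ := ((Real.sqrt (2/9) : ℝ) : ℂ)
    set b : ℂ := ((Real.sqrt (5/9) : ℝ) : ℂ)
    set X1 : ℂ := Complex.exp (Complex.I * (beta1:ℂ))
    set Y1 : ℂ := Complex.exp (-Complex.I * (beta1:ℂ))
    set X2 : ℂ := Complex.exp (Complex.I * (beta2:ℂ))
    set Y2 : ℂ := Complex.exp (-Complex.I * (beta2:ℂ))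
    set T : ℂ := Complex.exp (Complex.I * (mu:ℂ) * (t:ℂ))
    set S : ℂ := Complex.exp (-Complex.I * (mu:ℂ) * (t:ℂ))
    set H : ℂ := Complex.exp (Complex.I * (((beta1:ℂ) + (beta2:ℂ)) / 2))
    have h1 : Y1 * X1 = 1 := by
      rw [← Complex.exp_add]; norm_num [Complex.exp_zero]
    have h2 : Y2 * X2 = 1 := by
      rw [← Complex.exp_add]; norm_num [Complex.exp_zero]
    have h3 : S * T = 1 := by
      rw [← Complex.exp_add]; ring_nf; exact Complex.exp_zero
    have h4 : H ^ 2 = X1 * X2 := by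
      rw [sq, ← Complex.exp_add, ← Complex.exp_add]; congr 1; ring
    have h5 : a ^ 2 = 2 / 9 := by
      rw [← Complex.ofReal_pow, Real.sq_sqrt (by norm_num : (2:ℝ)/9 ≥ 0)]; norm_num
    have h6 : b ^ 2 = 5 / 9 := by
      rw [← Complex.ofReal_pow, Real.sq_sqrt (by norm_num : (5:ℝ)/9 ≥ 0)]; norm_num
    have h7 : Complex.I ^ 2 = -1 := Complex.I_sq
    have h8 : (mu : ℂ) = 8 / 9 * r ^ 2 := by rw [hmu]; push_cast; ring
    linear_combination (-2 * Complex.I * r^3 * a * b^2 * Y1 * S * H^2 * T^2) * h7 +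
      (2 * Complex.I * r^3 * a * b^2 * Y1 * S * T^2) * h4 +
      (2 * Complex.I * r^3 * a * Y1 * S * X1 * X2 * T^2) * h6 +
      (Complex.I * r^3 * a * X2 * T^2 * S * (10/9 - 2*a^2)) * h1 +
      (Complex.I * r^3 * a * X2 * T * (10/9 - a^2)) * h3 +
      (Complex.I * r^3 * a^3 * X2 * T^2 * S) * h2 +
      (-Complex.I * r^3 * a * X2 * T) * h5 +
      (-Complex.I * r * a * X2 * T) * h8
  · have h := (key_exp_deriv ((lam : ℂ) * Complex.I * Real.sqrt (5 / 9) *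
      Complex.exp (Complex.I * ((beta1 + beta2) / 2)))
      mu t).congr_of_eventuallyEq (Filter.Eventually.of_forall hd0)
    refine h.congr_deriv ?_
    symm
    rw [hd2 t, hdm2 t, hd0 t]
    simp only [map_mul, map_add, map_div₀, map_ofNat, ← Complex.exp_conj, Complex.conj_I,
      Complex.conj_ofReal]
    set r : ℂ := (lam : ℂ)
    set a : ℂ := ((Real.sqrt (2/9) : ℝ) : ℂ)
    set b : ℂ := ((Real.sqrt (5/9) : ℝ) : ℂ)
    set X1 : ℂ := Complex.exp (Complex.I * (beta1:ℂ))
    set X2 : ℂ := Complex.exp (Complex.I * (beta2:ℂ))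
    set T : ℂ := Complex.exp (Complex.I * (mu:ℂ) * (t:ℂ))
    set S : ℂ := Complex.exp (-Complex.I * (mu:ℂ) * (t:ℂ))
    set H : ℂ := Complex.exp (Complex.I * (((beta1:ℂ) + (beta2:ℂ)) / 2))
    set K : ℂ := Complex.exp (-Complex.I * (((beta1:ℂ) + (beta2:ℂ)) / 2))
    have h3 : S * T = 1 := by
      rw [← Complex.exp_add]; ring_nf; exact Complex.exp_zero
    have h4 : H ^ 2 = X1 * X2 := by
      rw [sq, ← Complex.exp_add, ← Complex.exp_add]; congr 1; ring
    have hK : K * H = 1 := by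
      rw [← Complex.exp_add]; ring_nf; exact Complex.exp_zero
    have h5 : a ^ 2 = 2 / 9 := by
      rw [← Complex.ofReal_pow, Real.sq_sqrt (by norm_num : (2:ℝ)/9 ≥ 0)]; norm_num
    have h7 : Complex.I ^ 2 = -1 := Complex.I_sq
    have h8 : (mu : ℂ) = 8 / 9 * r ^ 2 := by rw [hmu]; push_cast; ring
    linear_combination (4 * r^3 * a^2 * b * X1 * X2 * T^2 * K * S - r * b * (mu:ℂ) * H * T) * h7 +
      (r * b * H * T) * h8 +
      (-4 * r^3 * b * X1 * X2 * T^2 * K * S) * h5 +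
      ((8/9) * r^3 * b * T^2 * K * S) * h4 +
      (-(8/9) * r^3 * b * H * T^2 * S) * hK +
      (-(8/9) * r^3 * b * H * T) * h3
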